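/- Let A be a temporal Heyting algebra and let C be a set of prime filters of A that is upward closed under inclusion (x ∈ C and x ⊆ y imply y ∈ C) and archival: whenever z, x are prime filters with (◆a ∈ z for all a ∈ x), x ∉ C, and z ∈ C, there exists a prime filter y ∈ C with x ⊆ y and (◆a ∈ z for all a ∈ y). Then for all a, b ∈ A: if a ⇨ b belongs to every member of C, then ◆a ⇨ ◆b belongs to every member of C; hence the intersection of C is a ◆-filter of A. -/

import Mathlib

/-- A prime filter of a Heyting algebra. -/
def IsPrimeFilter {A : Type*} [HeytingAlgebra A] (x : Set A) : Prop :=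
  (⊤ : A) ∈ x ∧ (⊥ : A) ∉ x ∧ (∀ a b : A, a ∈ x → a ≤ b → b ∈ x) ∧
  (∀ a b : A, a ∈ x → b ∈ x → a ⊓ b ∈ x) ∧
  (∀ a b : A, a ⊔ b ∈ x → a ∈ x ∨ b ∈ x)

/-- A ◆-filter of a temporal Heyting algebra. -/
def IsDiaFilter {A : Type*} [HeytingAlgebra A] (dia : A → A) (F : Set A) : Prop :=
  (⊤ : A) ∈ F ∧ (∀ a b : A, a ∈ F → a ≤ b → b ∈ F) ∧
  (∀ a b : A, a ∈ F → b ∈ F → a ⊓ b ∈ F) ∧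
  (∀ a b : A, a ⇨ b ∈ F → dia a ⇨ dia b ∈ F)

/-- Prime filter separation in a Heyting algebra, derived from the
distributive-lattice prime ideal separator in Mathlib. -/
lemma prime_filter_sep {A : Type*} [HeytingAlgebra A] {F I : Set A}
    (hF : Order.IsPFilter F) (hI : Order.IsIdeal I) (hFI : Disjoint F I) :
    ∃ x : Set A, IsPrimeFilter x ∧ F ⊆ x ∧ Disjoint x I := by
  obtain ⟨J, hJprime, hIJ, hdisj⟩ :=
    DistribLattice.prime_ideal_of_disjoint_filter_ideal
      (F := hF.toPFilter) (I := hI.toIdeal)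
      (by exact hFI)
  have hFcoe : (hF.toPFilter : Set A) = F := rfl
  refine ⟨(J : Set A)ᶜ, ?_, ?_, ?_⟩
  · have htop : (⊤ : A) ∉ J := by
      intro htop
      apply hJprime.toIsProper.ne_univ
      ext a
      simp only [Set.mem_univ, iff_true]
      exact J.lower le_top htop
    refine ⟨htop, by simp [J.bot_mem], ?_, ?_, ?_⟩
    · intro a b ha hab hb
      exact ha (J.lower hab hb)
    · intro a b ha hb hab
      rcases hJprime.mem_or_mem hab with h | h
      · exact ha h
      · exact hb h
    · intro a b hab
      by_contra h
      push_neg at h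
      simp only [Set.mem_compl_iff, not_not] at h
      exact hab (Order.Ideal.sup_mem h.1 h.2)
  · intro a haF
    exact Set.disjoint_left.mp hdisj (by exact haF)
  · rw [Set.disjoint_left]
    intro a ha haI
    exact ha (hIJ haI)

/-- The intersection of an archival upward-closed set of prime filters is a ◆-filter. -/
theorem stmt7 {A : Type*} [HeytingAlgebra A] (box dia : A → A)
    (hbox_meet : ∀ a b : A, box (a ⊓ b) = box a ⊓ box b)
    (hbox_incr : ∀ a : A, a ≤ box a)
    (hbox_front : ∀ a b : A, box a ≤ b ⊔ (b ⇨ a))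
    (hadj : ∀ a b : A, dia a ≤ b ↔ a ≤ box b)
    (C : Set (Set A))
    (hmem : ∀ x ∈ C, IsPrimeFilter x)
    (hup : ∀ x ∈ C, ∀ y : Set A, IsPrimeFilter y → x ⊆ y → y ∈ C)
    (harc : ∀ z x : Set A, IsPrimeFilter z → IsPrimeFilter x →
      (∀ a ∈ x, dia a ∈ z) → x ∉ C → z ∈ C →
      ∃ y ∈ C, x ⊆ y ∧ ∀ a ∈ y, dia a ∈ z) :
    (∀ a b : A, (∀ x ∈ C, a ⇨ b ∈ x) → ∀ x ∈ C, dia a ⇨ dia b ∈ x) ∧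
    IsDiaFilter dia (⋂₀ C) := by
  -- box is monotone
  have hbox_mono : ∀ {a b : A}, a ≤ b → box a ≤ box b := by
    intro a b hab
    have : box (a ⊓ b) = box a ⊓ box b := hbox_meet a b
    rw [inf_eq_left.mpr hab] at this
    rw [this]; exact inf_le_right
  -- dia is monotone
  have hdia_mono : ∀ {a b : A}, a ≤ b → dia a ≤ dia b := by
    intro a b hab
    rw [hadj]
    exact le_trans hab ((hadj b (dia b)).mp le_rfl)
  -- dia ⊥ = ⊥
  have hdia_bot : dia (⊥ : A) = ⊥ :=
    le_antisymm ((hadj ⊥ ⊥).mpr bot_le) bot_le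
  -- dia preserves joins
  have hdia_sup : ∀ a b : A, dia (a ⊔ b) ≤ dia a ⊔ dia b := by
    intro a b
    rw [hadj]
    apply sup_le
    · exact le_trans ((hadj a (dia a)).mp le_rfl) (hbox_mono le_sup_left)
    · exact le_trans ((hadj b (dia b)).mp le_rfl) (hbox_mono le_sup_right)
  have key : ∀ a b : A, (∀ x ∈ C, a ⇨ b ∈ x) → ∀ x ∈ C, dia a ⇨ dia b ∈ x := by
    intro a b hab z hz
    by_contra h
    obtain ⟨ztop, zbot, zup, zmeet, zprime⟩ := hmem z hz
    -- Step 1: extend z to a prime filter w containing dia a and avoiding dia b.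
    set F1 : Set A := {e | ∃ p ∈ z, p ⊓ dia a ≤ e} with hF1
    have hF1filter : Order.IsPFilter F1 := by
      apply Order.IsPFilter.of_def
      · exact ⟨⊤, ⊤, ztop, le_top⟩
      · rintro e ⟨p, hp, hpe⟩ f ⟨q, hq, hqf⟩
        refine ⟨e ⊓ f, ⟨p ⊓ q, zmeet p q hp hq, ?_⟩, inf_le_left, inf_le_right⟩
        refine le_inf (le_trans ?_ hpe) (le_trans ?_ hqf) <;>
          exact inf_le_inf_right _ (by simp)
      · rintro e f hef ⟨p, hp, hpe⟩
        exact ⟨p, hp, le_trans hpe hef⟩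
    have hI1ideal : Order.IsIdeal {e : A | e ≤ dia b} := by
      refine ⟨fun e f hef hf => le_trans hef hf, ⟨⊥, bot_le⟩, ?_⟩
      rintro e he f hf
      exact ⟨e ⊔ f, sup_le he hf, le_sup_left, le_sup_right⟩
    have hdisj1 : Disjoint F1 {e : A | e ≤ dia b} := by
      rw [Set.disjoint_left]
      rintro e ⟨p, hp, hpe⟩ hedb
      apply h
      apply zup p _ hp
      rw [le_himp_iff]
      exact le_trans hpe hedb
    obtain ⟨w, hwprime, hF1w, hwdisj⟩ := prime_filter_sep hF1filter hI1ideal hdisj1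
    have hzw : z ⊆ w := fun p hp => hF1w ⟨p, hp, inf_le_left⟩
    have hdaw : dia a ∈ w := hF1w ⟨⊤, ztop, by simp⟩
    have hdbw : dia b ∉ w := fun hmemw =>
      Set.disjoint_left.mp hwdisj hmemw le_rfl
    have hwC : w ∈ C := hup z hz w hwprime hzw
    obtain ⟨wtop, wbot, wup, wmeet, wprime⟩ := hwprime
    -- Step 2: find a prime filter x with a ∈ x and dia[x] ⊆ w.
    have hF2filter : Order.IsPFilter {e : A | a ≤ e} := by
      apply Order.IsPFilter.of_def
      · exact ⟨a, le_rfl⟩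
      · intro e he f hf
        exact ⟨e ⊓ f, le_inf he hf, inf_le_left, inf_le_right⟩
      · intro e f hef he
        exact le_trans he hef
    set I2 : Set A := {e | dia e ∉ w} with hI2
    have hI2ideal : Order.IsIdeal I2 := by
      refine ⟨?_, ⟨⊥, ?_⟩, ?_⟩
      · intro e f hef hf hde
        exact hf (wup _ _ hde (hdia_mono hef))
      · show dia ⊥ ∉ w
        rw [hdia_bot]; exact wbot
      · rintro e he f hf
        refine ⟨e ⊔ f, ?_, le_sup_left, le_sup_right⟩
        intro hdef
        rcases wprime _ _ (wup _ _ hdef (hdia_sup e f)) with hc | hc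
        · exact he hc
        · exact hf hc
    have hdisj2 : Disjoint {e : A | a ≤ e} I2 := by
      rw [Set.disjoint_left]
      intro e hae hde
      exact hde (wup _ _ hdaw (hdia_mono hae))
    obtain ⟨x, hxprime, hF2x, hxdisj⟩ := prime_filter_sep hF2filter hI2ideal hdisj2
    have hax : a ∈ x := hF2x le_rfl
    have hdiax : ∀ c ∈ x, dia c ∈ w := by
      intro c hc
      by_contra hdc
      exact Set.disjoint_left.mp hxdisj hc hdc
    -- In either case get a member y of C containing a with dia[y] ⊆ w.
    have final : ∃ y ∈ C, a ∈ y ∧ ∀ c ∈ y, dia c ∈ w := by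
      by_cases hxC : x ∈ C
      · exact ⟨x, hxC, hax, hdiax⟩
      · obtain ⟨y, hyC, hxy, hdy⟩ :=
          harc w x ⟨wtop, wbot, wup, wmeet, wprime⟩ hxprime hdiax hxC hwC
        exact ⟨y, hyC, hxy hax, hdy⟩
    obtain ⟨y, hyC, hay, hdy⟩ := final
    obtain ⟨ytop, ybot, yup, ymeet, yprime⟩ := hmem y hyC
    have hby : b ∈ y := by
      have : a ⊓ (a ⇨ b) ∈ y := ymeet _ _ hay (hab y hyC)
      exact yup _ _ this (by simp)
    exact hdbw (hdy b hby)
  refine ⟨key, ?_, ?_, ?_, ?_⟩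
  · intro x hx
    exact (hmem x hx).1
  · intro a b ha hab
    intro x hx
    exact (hmem x hx).2.2.1 a b (ha x hx) hab
  · intro a b ha hb x hx
    exact (hmem x hx).2.2.2.1 a b (ha x hx) (hb x hx)
  · intro a b hab x hx
    exact key a b (fun t ht => hab t ht) x hx
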